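/- Let P(λ) = λ^3 + Aλ^2 + Bλ + D be a real cubic, and P_α(λ) = P(λ) + αλ. If α* = max{-P(1), P(-1), P(-D)/D} (with D ≠ 0), then for every α ≥ α* the polynomial P_α has a complex root of modulus ≥ 1. -/

import Mathlib

private lemma cubic_has_real_root (p q t : ℝ) :
    ∃ r : ℝ, r ^ 3 + p * r ^ 2 + q * r + t = 0 := by
  have ha := abs_nonneg p
  have hb := abs_nonneg q
  have hc := abs_nonneg t
  set M : ℝ := 1 + |p| + |q| + |t| with hM
  have hM1 : 1 ≤ M := by linarith
  have hcont : Continuous fun x : ℝ => x ^ 3 + p * x ^ 2 + q * x + t := by continuity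
  have h1 : (-M) ^ 3 + p * (-M) ^ 2 + q * (-M) + t ≤ 0 := by
    have h1p := le_abs_self p
    have h1q := neg_abs_le q
    have h1t := le_abs_self t
    nlinarith [mul_nonneg ha hb, mul_nonneg ha hc, mul_nonneg hb hc,
      mul_nonneg (mul_nonneg ha hb) hc, sq_nonneg (|p| + |q| + |t|),
      mul_nonneg (mul_nonneg ha ha) hb, mul_nonneg ha (mul_nonneg ha ha),
      mul_nonneg hb hb, mul_nonneg hc hc, mul_nonneg ha ha]
  have h2 : 0 ≤ M ^ 3 + p * M ^ 2 + q * M + t := by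
    have h1p := neg_abs_le p
    have h1q := neg_abs_le q
    have h1t := neg_abs_le t
    nlinarith [mul_nonneg ha hb, mul_nonneg ha hc, mul_nonneg hb hc,
      mul_nonneg (mul_nonneg ha hb) hc, sq_nonneg (|p| + |q| + |t|),
      mul_nonneg (mul_nonneg ha ha) hb, mul_nonneg ha (mul_nonneg ha ha),
      mul_nonneg hb hb, mul_nonneg hc hc, mul_nonneg ha ha]
  have hsub := intermediate_value_Icc (by linarith : -M ≤ M) hcont.continuousOn
  have h0 : (0 : ℝ) ∈ Set.Icc ((-M) ^ 3 + p * (-M) ^ 2 + q * (-M) + t)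
      (M ^ 3 + p * M ^ 2 + q * M + t) := ⟨h1, h2⟩
  obtain ⟨r, _, hr⟩ := hsub h0
  exact ⟨r, hr⟩

theorem unstable_above_max (A B D : ℝ) (hD : D ≠ 0) (α : ℝ)
    (hα : max (max (-(1 + A + B + D)) (-1 + A - B + D)) (-D ^ 2 + A * D - B + 1) ≤ α) :
    ∃ z : ℂ, z ^ 3 + (A : ℂ) * z ^ 2 + ((B : ℂ) + (α : ℂ)) * z + (D : ℂ) = 0 ∧
      1 ≤ ‖z‖ := by
  have hα3 : -D ^ 2 + A * D - B + 1 ≤ α := le_trans (le_max_right _ _) hα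
  obtain ⟨r, hr⟩ := cubic_has_real_root A (B + α) D
  have hrne : r ≠ 0 := by
    rintro rfl
    simp at hr
    exact hD hr
  have hrC : (r : ℂ) ^ 3 + (A : ℂ) * (r : ℂ) ^ 2 + ((B : ℂ) + (α : ℂ)) * (r : ℂ) + (D : ℂ) = 0 := by
    exact_mod_cast hr
  have hfact : ∀ z : ℂ,
      z ^ 2 + ((A : ℂ) + (r : ℂ)) * z + ((r : ℂ) ^ 2 + (A : ℂ) * (r : ℂ) + (B : ℂ) + (α : ℂ)) = 0 →
      z ^ 3 + (A : ℂ) * z ^ 2 + ((B : ℂ) + (α : ℂ)) * z + (D : ℂ) = 0 := by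
    intro z hz
    linear_combination (z - (r : ℂ)) * hz + hrC
  have hkey : α + D ^ 2 - A * D + B - 1 =
      ((r ^ 2 + A * r + B + α) - 1) *
        (1 + (A + r) * r + (r ^ 2 + A * r + B + α) * r ^ 2) := by
    linear_combination (D - r * (r ^ 2 + A * r + B + α) - A) * hr
  have hprod : 0 ≤ ((r ^ 2 + A * r + B + α) - 1) *
      (1 + (A + r) * r + (r ^ 2 + A * r + B + α) * r ^ 2) := by
    rw [← hkey]; linarith
  by_cases h1r : 1 ≤ |r|
  · exact ⟨(r : ℂ), hrC, by rwa [Complex.norm_real, Real.norm_eq_abs]⟩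
  push_neg at h1r
  set c := r ^ 2 + A * r + B + α with hc
  set b := A + r with hb
  by_cases hdisc : b ^ 2 - 4 * c < 0
  · -- complex conjugate roots of the quadratic, modulus² = c ≥ 1
    have hqpos : ∀ x : ℝ, 0 < x ^ 2 + b * x + c := by
      intro x
      nlinarith [sq_nonneg (2 * x + b)]
    have hr2 : 0 < r ^ 2 := by positivity
    have h2 : 0 < 1 + b * r + c * r ^ 2 := by
      have hq := hqpos (1 / r)
      have hid : 1 + b * r + c * r ^ 2 = r ^ 2 * ((1 / r) ^ 2 + b * (1 / r) + c) := by
        field_simp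
      rw [hid]
      positivity
    have hc1 : 1 ≤ c := by nlinarith [hprod, h2]
    set s := Real.sqrt (4 * c - b ^ 2) with hs
    have hs2 : s ^ 2 = 4 * c - b ^ 2 := Real.sq_sqrt (by linarith)
    have hsC : ((s : ℂ)) ^ 2 = 4 * (c : ℂ) - (b : ℂ) ^ 2 := by exact_mod_cast hs2
    refine ⟨((-b / 2 : ℝ) : ℂ) + ((s / 2 : ℝ) : ℂ) * Complex.I, ?_, ?_⟩
    · apply hfact
      have hbC : ((b : ℝ) : ℂ) = (A : ℂ) + (r : ℂ) := by rw [hb]; push_cast; ring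
      have hcC : ((c : ℝ) : ℂ) = (r : ℂ) ^ 2 + (A : ℂ) * (r : ℂ) + (B : ℂ) + (α : ℂ) := by
        rw [hc]; push_cast; ring
      rw [← hbC, ← hcC]
      have hI : (Complex.I : ℂ) ^ 2 = -1 := Complex.I_sq
      push_cast
      linear_combination ((s : ℂ) ^ 2 / 4) * hI + (-(1 : ℂ) / 4) * hsC
    · have habs : (‖(((-b / 2 : ℝ) : ℂ) + ((s / 2 : ℝ) : ℂ) * Complex.I)‖) ^ 2 = c := by
        rw [Complex.sq_norm, Complex.normSq_add_mul_I]
        linear_combination ((1 : ℝ) / 4) * hs2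
      nlinarith [norm_nonneg (((-b / 2 : ℝ) : ℂ) + ((s / 2 : ℝ) : ℂ) * Complex.I)]
  · -- two real roots u, v with u*v = c
    push_neg at hdisc
    set s := Real.sqrt (b ^ 2 - 4 * c) with hs
    have hs2 : s ^ 2 = b ^ 2 - 4 * c := Real.sq_sqrt (by linarith)
    set u := (-b + s) / 2 with hu
    set v := (-b - s) / 2 with hv
    have huv : u * v = c := by rw [hu, hv]; linear_combination (-(1 : ℝ) / 4) * hs2
    have hsum : u + v = -b := by rw [hu, hv]; ring
    have hqu : u ^ 2 + b * u + c = 0 := by rw [hu]; linear_combination ((1 : ℝ) / 4) * hs2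
    have hqv : v ^ 2 + b * v + c = 0 := by rw [hv]; linear_combination ((1 : ℝ) / 4) * hs2
    clear_value s u v
    have key : ∀ w : ℝ, w ^ 2 + b * w + c = 0 →
        (w : ℂ) ^ 2 + ((A : ℂ) + (r : ℂ)) * (w : ℂ) +
          ((r : ℂ) ^ 2 + (A : ℂ) * (r : ℂ) + (B : ℂ) + (α : ℂ)) = 0 := by
      intro w hw
      rw [hb, hc] at hw
      exact_mod_cast hw
    by_cases hu1 : 1 ≤ |u|
    · exact ⟨(u : ℂ), hfact _ (key u hqu), by rwa [Complex.norm_real, Real.norm_eq_abs]⟩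
    · push_neg at hu1
      refine ⟨(v : ℂ), hfact _ (key v hqv), ?_⟩
      rw [Complex.norm_real, Real.norm_eq_abs]
      by_contra hv1
      push_neg at hv1
      have habs_mul : ∀ x y : ℝ, |x| < 1 → |y| < 1 → x * y < 1 := by
        intro x y hx hy
        calc x * y ≤ |x * y| := le_abs_self _
          _ = |x| * |y| := abs_mul x y
          _ < 1 := by nlinarith [abs_nonneg x, abs_nonneg y]
      have h1u : 0 < 1 - r * u := by have := habs_mul r u h1r hu1; linarith
      have h1v : 0 < 1 - r * v := by have := habs_mul r v h1r hv1; linarith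
      have hclt : c < 1 := by have := habs_mul u v hu1 hv1; linarith [huv]
      have hident : 1 + b * r + c * r ^ 2 = (1 - r * u) * (1 - r * v) := by
        linear_combination r * hsum + (-(r ^ 2)) * huv
      rw [hident] at hprod
      have hpos : (0:ℝ) < (1 - c) * ((1 - r * u) * (1 - r * v)) :=
        mul_pos (by linarith) (mul_pos h1u h1v)
      linarith only [hprod, hpos]
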